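/- The fixed point Q*_{B_Π̂^N} of the Multi-Step Optimality Operator satisfies Q*_{B_Π̂^N} ≤ Q* componentwise for any N ≥ 2 and any finite policy set Π̂. -/

import Mathlib

open Finset Filter Topology

/-- A transition kernel: for each state-action pair, a probability distribution over states. -/
def IsKernel {S A : Type*} [Fintype S] (P : S × A → S → ℝ) : Prop :=
  ∀ p, (∀ s', 0 ≤ P p s') ∧ ∑ s', P p s' = 1

/-- A (stochastic) policy: for each state, a probability distribution over actions. -/
def IsPolicy {S A : Type*} [Fintype A] (π : S → A → ℝ) : Prop :=
  ∀ s, (∀ a, 0 ≤ π s a) ∧ ∑ a, π s a = 1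

/-- Bellman optimality operator: (B Q)(s,a) = r(s,a) + γ ∑_{s'} P(s'|s,a) max_{a'} Q(s',a'). -/
noncomputable def bOpt {S A : Type*} [Fintype S] [Fintype A] [Nonempty A]
    (P : S × A → S → ℝ) (r : S × A → ℝ) (γ : ℝ) (Q : S × A → ℝ) : S × A → ℝ :=
  fun p => r p + γ * ∑ s', P p s' * (univ.sup' univ_nonempty fun a' => Q (s', a'))

/-- Bellman expectation operator for policy π:
    (B^π Q)(s,a) = r(s,a) + γ ∑_{s'} P(s'|s,a) ∑_{a'} π(a'|s') Q(s',a'). -/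
noncomputable def bExp {S A : Type*} [Fintype S] [Fintype A]
    (P : S × A → S → ℝ) (r : S × A → ℝ) (γ : ℝ) (π : S → A → ℝ) (Q : S × A → ℝ) :
    S × A → ℝ :=
  fun p => r p + γ * ∑ s', P p s' * ∑ a', π s' a' * Q (s', a')

/-- Greedy Multi-Step Bellman Operator: G Q = max_{π ∈ Π̂} max_{1 ≤ n ≤ N} (B^π)^{n-1} B Q,
    componentwise, over a finite nonempty policy set indexed by ι. -/
noncomputable def gOp {S A : Type*} [Fintype S] [Fintype A] [Nonempty A]
    (P : S × A → S → ℝ) (r : S × A → ℝ) (γ : ℝ)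
    {ι : Type*} [Fintype ι] [Nonempty ι] (pol : ι → S → A → ℝ)
    (N : ℕ) (hN : 1 ≤ N) (Q : S × A → ℝ) : S × A → ℝ :=
  fun p => univ.sup' univ_nonempty fun i =>
    (Icc 1 N).sup' (nonempty_Icc.mpr hN) fun n =>
      ((bExp P r γ (pol i))^[n - 1] (bOpt P r γ Q)) p

/-- Multi-Step Optimality Operator: B Q = max over policies of (B^pi)^[N-1] (bOpt Q),
    i.e. roll out the policy for N steps and bootstrap the last step with a max. -/
noncomputable def mOp {S A : Type*} [Fintype S] [Fintype A] [Nonempty A]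
    (P : S × A → S → ℝ) (r : S × A → ℝ) (γ : ℝ)
    {ι : Type*} [Fintype ι] [Nonempty ι] (pol : ι → S → A → ℝ)
    (N : ℕ) (Q : S × A → ℝ) : S × A → ℝ :=
  fun p => Finset.univ.sup' Finset.univ_nonempty fun i =>
    ((bExp P r γ (pol i))^[N - 1] (bOpt P r γ Q)) p

section Aux

variable {S A : Type*} [Fintype S] [Fintype A] [Nonempty A]
variable (P : S × A → S → ℝ) (r : S × A → ℝ) (γ : ℝ)

lemma bExp_mono (hγ : 0 ≤ γ) (hP : IsKernel P) (π : S → A → ℝ) (hπ : IsPolicy π)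
    {Q1 Q2 : S × A → ℝ} (h : ∀ p, Q1 p ≤ Q2 p) :
    ∀ p, bExp P r γ π Q1 p ≤ bExp P r γ π Q2 p := by
  intro p
  unfold bExp
  refine add_le_add_right (mul_le_mul_of_nonneg_left (Finset.sum_le_sum fun s' _ => ?_) hγ) _
  refine mul_le_mul_of_nonneg_left (Finset.sum_le_sum fun a' _ => ?_) ((hP p).1 s')
  exact mul_le_mul_of_nonneg_left (h _) ((hπ s').1 a')

lemma bOpt_mono (hγ : 0 ≤ γ) (hP : IsKernel P)
    {Q1 Q2 : S × A → ℝ} (h : ∀ p, Q1 p ≤ Q2 p) :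
    ∀ p, bOpt P r γ Q1 p ≤ bOpt P r γ Q2 p := by
  intro p
  unfold bOpt
  refine add_le_add_right (mul_le_mul_of_nonneg_left (Finset.sum_le_sum fun s' _ => ?_) hγ) _
  refine mul_le_mul_of_nonneg_left ?_ ((hP p).1 s')
  exact Finset.sup'_le _ _ fun a _ => le_trans (h _)
    (Finset.le_sup' (fun a' => Q2 (s', a')) (Finset.mem_univ a))

lemma bExp_shift (hP : IsKernel P) (π : S → A → ℝ) (hπ : IsPolicy π)
    (Q : S × A → ℝ) (c : ℝ) :
    bExp P r γ π (fun p => Q p + c) = fun p => bExp P r γ π Q p + γ * c := by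
  funext p
  unfold bExp
  have h1 : ∀ s', (∑ a', π s' a' * (Q (s', a') + c)) = (∑ a', π s' a' * Q (s', a')) + c := by
    intro s'
    rw [show (∑ a', π s' a' * (Q (s', a') + c)) = (∑ a', (π s' a' * Q (s', a') + π s' a' * c)) by
      congr 1; funext a'; ring]
    rw [Finset.sum_add_distrib, ← Finset.sum_mul, (hπ s').2, one_mul]
  simp_rw [h1, mul_add, Finset.sum_add_distrib, ← Finset.sum_mul, (hP p).2, one_mul]
  ring

lemma bOpt_shift (hP : IsKernel P) (Q : S × A → ℝ) (c : ℝ) :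
    bOpt P r γ (fun p => Q p + c) = fun p => bOpt P r γ Q p + γ * c := by
  funext p
  unfold bOpt
  have h1 : ∀ s' : S, (Finset.univ.sup' Finset.univ_nonempty fun a' => Q (s', a') + c)
      = (Finset.univ.sup' Finset.univ_nonempty fun a' => Q (s', a')) + c := by
    intro s'
    apply le_antisymm
    · exact Finset.sup'_le _ _ fun a _ =>
        add_le_add_left (Finset.le_sup' (fun a' => Q (s', a')) (Finset.mem_univ a)) c
    · obtain ⟨a, _, ha⟩ := Finset.exists_mem_eq_sup' (Finset.univ_nonempty)
        (fun a' => Q (s', a'))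
      rw [ha]
      exact Finset.le_sup' (fun a' => Q (s', a') + c) (Finset.mem_univ a)
  simp_rw [h1, mul_add, Finset.sum_add_distrib, ← Finset.sum_mul, (hP p).2, one_mul]
  ring

lemma bExp_iter_shift (hP : IsKernel P) (π : S → A → ℝ) (hπ : IsPolicy π)
    (Q : S × A → ℝ) (c : ℝ) (n : ℕ) :
    (bExp P r γ π)^[n] (fun p => Q p + c) = fun p => (bExp P r γ π)^[n] Q p + γ ^ n * c := by
  induction n generalizing Q c with
  | zero => simp
  | succ n ih =>
    rw [Function.iterate_succ_apply, bExp_shift P r γ hP π hπ, ih]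
    funext p
    rw [Function.iterate_succ_apply, pow_succ]
    ring

lemma bExp_le_bOpt (hγ : 0 ≤ γ) (hP : IsKernel P) (π : S → A → ℝ) (hπ : IsPolicy π)
    (Q : S × A → ℝ) : ∀ p, bExp P r γ π Q p ≤ bOpt P r γ Q p := by
  intro p
  unfold bExp bOpt
  refine add_le_add_right (mul_le_mul_of_nonneg_left (Finset.sum_le_sum fun s' _ => ?_) hγ) _
  refine mul_le_mul_of_nonneg_left ?_ ((hP p).1 s')
  calc ∑ a', π s' a' * Q (s', a')
      ≤ ∑ a', π s' a' * (Finset.univ.sup' Finset.univ_nonempty fun a' => Q (s', a')) :=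
        Finset.sum_le_sum fun a _ =>
          mul_le_mul_of_nonneg_left (Finset.le_sup' (fun a' => Q (s', a')) (Finset.mem_univ a)) ((hπ s').1 a)
    _ = _ := by rw [← Finset.sum_mul, (hπ s').2, one_mul]

end Aux

/-- the fixed point of the Multi-Step Optimality Operator is ≤ Q*
    componentwise, for any N ≥ 2 and any finite policy set. -/
theorem multistep_optimality_fixed_point_le
    {S A : Type*} [Fintype S] [Fintype A] [Nonempty S] [Nonempty A]
    (P : S × A → S → ℝ) (r : S × A → ℝ) (γ : ℝ) (hγ0 : 0 < γ) (hγ1 : γ < 1)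
    (hP : IsKernel P)
    {ι : Type*} [Fintype ι] [Nonempty ι]
    (pol : ι → S → A → ℝ) (hpol : ∀ i, IsPolicy (pol i))
    (N : ℕ) (hN : 2 ≤ N)
    (Qstar : S × A → ℝ) (hQ : bOpt P r γ Qstar = Qstar)
    (Qfix : S × A → ℝ) (hQfix : mOp P r γ pol N Qfix = Qfix) :
    ∀ p, Qfix p ≤ Qstar p := by
  classical
  have hγ := hγ0.le
  set M := (Finset.univ : Finset (S × A)).sup' Finset.univ_nonempty
    (fun q => Qfix q - Qstar q) with hMdef
  have hle : ∀ q, Qfix q ≤ Qstar q + M := by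
    intro q
    have h := Finset.le_sup' (fun q : S × A => Qfix q - Qstar q) (Finset.mem_univ q)
    rw [← hMdef] at h
    linarith
  have hiter_mono : ∀ (π : S → A → ℝ), IsPolicy π → ∀ (n : ℕ) {Q1 Q2 : S × A → ℝ},
      (∀ q, Q1 q ≤ Q2 q) → ∀ q, (bExp P r γ π)^[n] Q1 q ≤ (bExp P r γ π)^[n] Q2 q := by
    intro π hπ n
    induction n with
    | zero => intro Q1 Q2 h q; simpa using h q
    | succ n ih =>
      intro Q1 Q2 h q
      rw [Function.iterate_succ_apply', Function.iterate_succ_apply']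
      exact bExp_mono P r γ hγ hP π hπ (ih h) q
  have hQstar_iter : ∀ i (n : ℕ) q, (bExp P r γ (pol i))^[n] Qstar q ≤ Qstar q := by
    intro i n
    induction n with
    | zero => intro q; simp
    | succ n ih =>
      intro q
      rw [Function.iterate_succ_apply']
      calc bExp P r γ (pol i) ((bExp P r γ (pol i))^[n] Qstar) q
          ≤ bExp P r γ (pol i) Qstar q := bExp_mono P r γ hγ hP _ (hpol i) ih q
        _ ≤ bOpt P r γ Qstar q := bExp_le_bOpt P r γ hγ hP _ (hpol i) Qstar q
        _ = Qstar q := by rw [hQ]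
  have key : ∀ q, Qfix q ≤ Qstar q + γ ^ N * M := by
    intro q
    have h1 : Qfix q = mOp P r γ pol N Qfix q := by rw [hQfix]
    rw [h1]
    unfold mOp
    apply Finset.sup'_le
    intro i _
    have step1 : ((bExp P r γ (pol i))^[N-1] (bOpt P r γ Qfix)) q
        ≤ ((bExp P r γ (pol i))^[N-1] (bOpt P r γ (fun p => Qfix p))) q := le_refl _
    have step1' : ((bExp P r γ (pol i))^[N-1] (bOpt P r γ Qfix)) q
        ≤ ((bExp P r γ (pol i))^[N-1] (bOpt P r γ (fun p => Qstar p + M))) q :=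
      hiter_mono _ (hpol i) _ (bOpt_mono P r γ hγ hP hle) q
    rw [bOpt_shift P r γ hP, bExp_iter_shift P r γ hP _ (hpol i)] at step1'
    have step2 : ((bExp P r γ (pol i))^[N-1] (bOpt P r γ Qstar)) q ≤ Qstar q := by
      rw [hQ]; exact hQstar_iter i _ q
    have hpow : γ ^ (N - 1) * (γ * M) = γ ^ N * M := by
      rw [← mul_assoc, ← pow_succ]
      congr 2
      omega
    simp only at step1'
    linarith [step1', step2, hpow.ge, hpow.le]
  obtain ⟨q0, _, hq0⟩ := Finset.exists_mem_eq_sup' (Finset.univ_nonempty)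
    (fun q : S × A => Qfix q - Qstar q)
  have hMle : M ≤ γ ^ N * M := by
    have h := key q0
    have hMeq : M = Qfix q0 - Qstar q0 := hMdef.trans hq0
    linarith
  have hpowlt : γ ^ N < 1 := pow_lt_one₀ hγ hγ1 (by omega)
  have hM0 : M ≤ 0 := by
    by_contra hMpos
    push_neg at hMpos
    have : γ ^ N * M < 1 * M := mul_lt_mul_of_pos_right hpowlt hMpos
    rw [one_mul] at this
    linarith
  intro p
  have := hle p
  linarith
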